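/- If T is a complex symmetric operator on a complex Hilbert space, then its spectrum equals its approximate point spectrum: σ(T) = σ_ap(T). -/

import Mathlib

open ContinuousLinearMap

def IsConjugation {H : Type*} [NormedAddCommGroup H] [InnerProductSpace ℂ H]
    (C : H → H) : Prop :=
  (∀ x y, C (x + y) = C x + C y) ∧
  (∀ (a : ℂ) (x : H), C (a • x) = (starRingEnd ℂ a) • C x) ∧
  (∀ x, ‖C x‖ = ‖x‖) ∧
  (∀ x, C (C x) = x)

def IsCSO {H : Type*} [NormedAddCommGroup H] [InnerProductSpace ℂ H]
    [CompleteSpace H] (T : H →L[ℂ] H) : Prop :=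
  ∃ C : H → H, IsConjugation C ∧ ∀ x, T x = C (adjoint T (C x))

def approxSpec {H : Type*} [NormedAddCommGroup H] [InnerProductSpace ℂ H]
    (T : H →L[ℂ] H) : Set ℂ :=
  {lam | ∀ ε > (0:ℝ), ∃ x : H, ‖x‖ = 1 ∧ ‖T x - lam • x‖ < ε}

/-- A lower bound on unit vectors gives a global lower bound. -/
lemma lower_bound_of_unit {H : Type*} [NormedAddCommGroup H] [InnerProductSpace ℂ H]
    (S : H →L[ℂ] H) (ε : ℝ) (h : ∀ x : H, ‖x‖ = 1 → ε ≤ ‖S x‖) :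
    ∀ x : H, ε * ‖x‖ ≤ ‖S x‖ := by
  intro x
  rcases eq_or_ne x 0 with rfl | hx
  · simp
  · have hnx : ‖x‖ ≠ 0 := norm_ne_zero_iff.mpr hx
    have h1 : ‖((‖x‖ : ℂ)⁻¹ • x)‖ = 1 := by
      rw [norm_smul]
      simp [norm_inv, hnx]
    have := h _ h1
    rw [map_smul, norm_smul] at this
    simp only [norm_inv, Complex.norm_real, norm_norm] at this
    calc ε * ‖x‖ ≤ (‖x‖⁻¹ * ‖S x‖) * ‖x‖ := by
          exact mul_le_mul_of_nonneg_right this (norm_nonneg x)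
      _ = ‖S x‖ := by field_simp

/-- For a complex symmetric operator, the spectrum coincides with the
approximate point spectrum. -/
theorem spectrum_eq_approxSpec_of_CSO {H : Type*} [NormedAddCommGroup H]
    [InnerProductSpace ℂ H] [CompleteSpace H] [Nontrivial H]
    (T : H →L[ℂ] H) (hT : IsCSO T) :
    spectrum ℂ T = approxSpec T := by
  obtain ⟨C, ⟨Cadd, Csmul, Cnorm, Cinv⟩, hTC⟩ := hT
  ext lam
  constructor
  · -- spectrum ⊆ approxSpec
    intro hlam
    by_contra hap
    simp only [approxSpec, Set.mem_setOf_eq, not_forall, not_exists, not_and, not_lt] at hap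
    obtain ⟨ε, hε, hbd⟩ := hap
    set S : H →L[ℂ] H := algebraMap ℂ (H →L[ℂ] H) lam - T with hS
    have hbd' : ∀ x : H, ‖x‖ = 1 → ε ≤ ‖S x‖ := by
      intro x hx
      have := hbd x hx
      simpa [hS, norm_sub_rev] using this
    have hlb : ∀ x : H, ε * ‖x‖ ≤ ‖S x‖ := lower_bound_of_unit S ε hbd'
    -- S is injective
    have hker : LinearMap.ker (S : H →ₗ[ℂ] H) = ⊥ := by
      rw [LinearMap.ker_eq_bot']
      intro x hx
      have := hlb x
      rw [show S x = 0 from hx, norm_zero] at this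
      have : ‖x‖ ≤ 0 := by nlinarith [norm_nonneg x]
      exact norm_le_zero_iff.mp this
    -- S has closed range
    have hanti : AntilipschitzWith (⟨ε, le_of_lt hε⟩ : NNReal)⁻¹ S := by
      apply S.antilipschitz_of_bound
      intro x
      have h2 := hlb x
      have hc : ((((⟨ε, le_of_lt hε⟩ : NNReal))⁻¹ : NNReal) : ℝ) = ε⁻¹ := by exact NNReal.coe_inv _
      rw [hc]
      calc ‖x‖ = ε⁻¹ * (ε * ‖x‖) := by field_simp
        _ ≤ ε⁻¹ * ‖S x‖ := by
            exact mul_le_mul_of_nonneg_left h2 (le_of_lt (inv_pos.mpr hε))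
    have hclosed : IsClosed (Set.range S) := hanti.isClosed_range S.uniformContinuous
    set K : Submodule ℂ H := LinearMap.range (S : H →ₗ[ℂ] H) with hK
    have hKclosed : IsClosed (K : Set H) := by
      have : (K : Set H) = Set.range S := by
        ext x; simp [hK, LinearMap.mem_range]
      rw [this]; exact hclosed
    haveI : CompleteSpace K := hKclosed.completeSpace_coe
    -- range can't be ⊤ (else S is a unit)
    have hKne : K ≠ ⊤ := by
      intro htop
      have hsurj : LinearMap.range (S : H →ₗ[ℂ] H) = ⊤ := by rw [← hK]; exact htop
      have : IsUnit S := by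
        refine ⟨⟨S, (ContinuousLinearEquiv.ofBijective S hker hsurj).symm.toContinuousLinearMap,
          ?_, ?_⟩, rfl⟩
        · ext x
          exact ContinuousLinearEquiv.ofBijective_apply_symm_apply S hker hsurj x
        · ext x
          exact ContinuousLinearEquiv.ofBijective_symm_apply_apply S hker hsurj x
      exact (spectrum.mem_iff.mp hlam) this
    -- get a unit vector y with (adjoint T) y = conj lam • y
    have hbot : Kᗮ ≠ ⊥ := fun h => hKne (Submodule.orthogonal_eq_bot_iff.mp h)
    obtain ⟨y, hyK, hy0⟩ := Submodule.exists_mem_ne_zero_of_ne_bot hbot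
    have hady : adjoint S y = 0 := by
      have h3 : ∀ x : H, inner ℂ x (adjoint S y) = (0 : ℂ) := by
        intro x
        rw [adjoint_inner_right]
        exact (Submodule.mem_orthogonal K y).mp hyK (S x) (LinearMap.mem_range_self _ x)
      have := h3 (adjoint S y)
      rwa [inner_self_eq_zero] at this
    have hadj : adjoint T y = (starRingEnd ℂ lam) • y := by
      have hSadj : adjoint S = (starRingEnd ℂ lam) • (1 : H →L[ℂ] H) - adjoint T := by
        rw [hS, Algebra.algebraMap_eq_smul_one, map_sub, map_smulₛₗ]
        congr 1
        rw [show (1 : H →L[ℂ] H) = ContinuousLinearMap.id ℂ H from rfl, adjoint_id]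
      rw [hSadj] at hady
      have h4 : (starRingEnd ℂ lam) • y - adjoint T y = 0 := by
        simpa [ContinuousLinearMap.sub_apply, ContinuousLinearMap.smul_apply] using hady
      have := sub_eq_zero.mp h4
      exact this.symm
    -- normalize y and conjugate to get an eigenvector of T
    have hny : ‖y‖ ≠ 0 := norm_ne_zero_iff.mpr hy0
    set y1 : H := ((‖y‖ : ℂ))⁻¹ • y with hy1
    have hy1norm : ‖y1‖ = 1 := by
      rw [hy1, norm_smul]
      simp [norm_inv, hny]
    have hadj1 : adjoint T y1 = (starRingEnd ℂ lam) • y1 := by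
      rw [hy1, map_smul, hadj, smul_comm]
    set x : H := C y1 with hx
    have hxnorm : ‖x‖ = 1 := by rw [hx, Cnorm]; exact hy1norm
    have hTx : T x = lam • x := by
      rw [hTC x, hx, Cinv, hadj1, Csmul]
      simp
    have := hbd x hxnorm
    rw [hTx, sub_self, norm_zero] at this
    linarith
  · -- approxSpec ⊆ spectrum
    intro hap
    rw [spectrum.mem_iff]
    intro hunit
    obtain ⟨u, hu⟩ := hunit
    set B : H →L[ℂ] H := ↑u⁻¹ with hB
    have happ : ∀ z : H, B ((↑u : H →L[ℂ] H) z) = z := by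
      intro z
      rw [hB, ← ContinuousLinearMap.mul_apply, ← Units.val_mul, inv_mul_cancel,
        Units.val_one, ContinuousLinearMap.one_apply]
    have hBpos : 0 < ‖B‖ := by
      refine norm_pos_iff.mpr ?_
      intro h0
      obtain ⟨z, hz⟩ := exists_ne (0 : H)
      have h1 := happ z
      rw [h0] at h1
      exact hz (by simpa using h1.symm)
    obtain ⟨x, hx1, hxlt⟩ := hap (‖B‖⁻¹) (inv_pos.mpr hBpos)
    have key : ‖x‖ ≤ ‖B‖ * ‖T x - lam • x‖ := by
      calc ‖x‖ = ‖B ((↑u : H →L[ℂ] H) x)‖ := by rw [happ x]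
        _ ≤ ‖B‖ * ‖(↑u : H →L[ℂ] H) x‖ := B.le_opNorm _
        _ = ‖B‖ * ‖T x - lam • x‖ := by
            rw [hu]
            congr 1
            rw [ContinuousLinearMap.sub_apply, Algebra.algebraMap_eq_smul_one]
            simp [norm_sub_rev]
    rw [hx1] at key
    have : ‖B‖ * ‖T x - lam • x‖ < ‖B‖ * ‖B‖⁻¹ :=
      mul_lt_mul_of_pos_left hxlt hBpos
    rw [mul_inv_cancel₀ (ne_of_gt hBpos)] at this
    linarith
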